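/- Let k be a field and 𝒫_n the poset {1 < 2 < … < n−1} ⊔ {1'} ⊔ {1''} consisting of a chain of length n−1 and two incomparable extra points. Every indecomposable k-linear representation V of 𝒫_n (a vector space V⁰ with subspaces V^i, i ∈ 𝒫_n, satisfying V^i ⊆ V^j for i ≤ j) has total space V⁰ of dimension at most 2. -/

import Mathlib

open Submodule Module

section helpers

variable {k V : Type} [Field k] [AddCommGroup V] [Module k V]

/-- Given a subspace `T` disjoint from `L`, there is a complement of `L` containing `T`. -/
lemma exists_compl_ge (L T : Submodule k V) (h : Disjoint L T) :
    ∃ U' : Submodule k V, IsCompl L U' ∧ T ≤ U' := by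
  obtain ⟨Q, hQ⟩ := Submodule.exists_isCompl (L ⊔ T)
  refine ⟨T ⊔ Q, ⟨?_, ?_⟩, le_sup_left⟩
  · rw [disjoint_iff, eq_bot_iff]
    rintro x hx
    rw [Submodule.mem_inf] at hx
    obtain ⟨hxL, hxTQ⟩ := hx
    obtain ⟨t, ht, q, hq, hsum⟩ := Submodule.mem_sup.1 hxTQ
    have hq1 : q ∈ (L ⊔ T) := by
      have hqe : q = x - t := by rw [← hsum]; abel
      rw [hqe]
      exact sub_mem (Submodule.mem_sup_left hxL) (Submodule.mem_sup_right ht)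
    have hq0 : q = 0 :=
      (Submodule.mem_bot k).1 (hQ.disjoint.le_bot (Submodule.mem_inf.2 ⟨hq1, hq⟩))
    have hxt : x = t := by rw [← hsum, hq0, add_zero]
    subst hxt
    exact (Submodule.mem_bot k).1 (h.le_bot (Submodule.mem_inf.2 ⟨hxL, ht⟩))
  · rw [codisjoint_iff, ← sup_assoc]
    exact hQ.codisjoint.eq_top

/-- Relative complement: a complement of `span {a}` inside `A` containing a
prescribed subspace `S` not containing `a`. -/
lemma exists_rel_compl {A S : Submodule k V} {a : V} (haA : a ∈ A) (hSA : S ≤ A)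
    (haS : a ∉ S) :
    ∃ A₀ : Submodule k V, S ≤ A₀ ∧ A₀ ≤ A ∧ Disjoint (span k {a}) A₀ ∧
      span k {a} ⊔ A₀ = A := by
  obtain ⟨Q, hQ⟩ := Submodule.exists_isCompl (span k {a} ⊔ S)
  have h1 : span k {a} ⊔ S ≤ A :=
    sup_le (span_le.2 (Set.singleton_subset_iff.2 haA)) hSA
  refine ⟨S ⊔ Q ⊓ A, le_sup_left, sup_le hSA inf_le_right, ?_, ?_⟩
  · rw [disjoint_iff, eq_bot_iff]
    rintro x hx
    rw [Submodule.mem_inf] at hx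
    obtain ⟨hx1, hx2⟩ := hx
    obtain ⟨s, hs, q, hq, hsum⟩ := Submodule.mem_sup.1 hx2
    have hq1 : q ∈ (span k {a} ⊔ S) := by
      have hqe : q = x - s := by rw [← hsum]; abel
      rw [hqe]
      exact sub_mem (Submodule.mem_sup_left hx1) (Submodule.mem_sup_right hs)
    have hq0 : q = 0 :=
      (Submodule.mem_bot k).1 (hQ.disjoint.le_bot (Submodule.mem_inf.2 ⟨hq1, hq.1⟩))
    have hxs : x = s := by rw [← hsum, hq0, add_zero]
    obtain ⟨c, hc⟩ := Submodule.mem_span_singleton.1 hx1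
    rcases eq_or_ne c 0 with hc0 | hc0
    · rw [Submodule.mem_bot k, ← hc, hc0, zero_smul]
    · exfalso
      apply haS
      have hxS : x ∈ S := hxs ▸ hs
      have : c • a ∈ S := hc ▸ hxS
      have h5 := S.smul_mem c⁻¹ this
      rwa [smul_smul, inv_mul_cancel₀ hc0, one_smul] at h5
  · calc span k {a} ⊔ (S ⊔ Q ⊓ A) = (span k {a} ⊔ S) ⊔ Q ⊓ A := by rw [sup_assoc]
    _ = ((span k {a} ⊔ S) ⊔ Q) ⊓ A := (sup_inf_assoc_of_le _ h1).symm
    _ = A := by rw [hQ.codisjoint.eq_top, top_inf_eq]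

lemma split_of_le {U U' S : Submodule k V} (h : IsCompl U U') (hUS : U ≤ S) :
    S = S ⊓ U ⊔ S ⊓ U' := by
  have h2 := sup_inf_assoc_of_le (x := U) U' (z := S) hUS
  rw [h.sup_eq_top, top_inf_eq] at h2
  rw [inf_eq_right.2 hUS, inf_comm S U']
  exact h2

lemma split_of_le_right {U U' S : Submodule k V} (hS : S ≤ U') :
    S = S ⊓ U ⊔ S ⊓ U' := by
  rw [inf_eq_left.2 hS]
  exact (sup_eq_right.2 inf_le_left).symm

lemma split_of_mem_line {U U' S : Submodule k V} {v : V} (hvS : v ∈ S) (hvU : v ∈ U)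
    (hle : S ≤ span k {v} ⊔ U') : S = S ⊓ U ⊔ S ⊓ U' := by
  refine le_antisymm ?_ (sup_le inf_le_left inf_le_left)
  have h1 : span k {v} ≤ S := span_le.2 (Set.singleton_subset_iff.2 hvS)
  have h2 : (span k {v} ⊔ U') ⊓ S = span k {v} ⊔ U' ⊓ S := sup_inf_assoc_of_le _ h1
  have h3 : S = span k {v} ⊔ U' ⊓ S := by
    conv_lhs => rw [← inf_eq_right.2 hle]
    exact h2
  calc S = span k {v} ⊔ U' ⊓ S := h3
  _ ≤ S ⊓ U ⊔ S ⊓ U' := by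
      refine sup_le ?_ ?_
      · exact le_trans (le_inf h1 (span_le.2 (Set.singleton_subset_iff.2 hvU))) le_sup_left
      · rw [inf_comm]; exact le_sup_right

/-- Common splitting construction from a single vector `x` and a "wall" `T`:
if every member of the family either contains `x` or is contained in `T`,
and `x ∉ T`, we obtain a nontrivial compatible decomposition. -/
lemma split_from_vector [FiniteDimensional k V] (hdim : 3 ≤ finrank k V)
    {m : ℕ} (W : Fin m → Submodule k V) (A B : Submodule k V)
    {x : V} (hx : x ≠ 0) (T : Submodule k V) (hxT : x ∉ T)
    (hA : x ∈ A ∨ A ≤ T) (hB : x ∈ B ∨ B ≤ T) (hC : ∀ i, x ∈ W i ∨ W i ≤ T) :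
    ∃ U U' : Submodule k V, U ≠ ⊥ ∧ U' ≠ ⊥ ∧ IsCompl U U' ∧
      (∀ i, W i = (W i ⊓ U) ⊔ (W i ⊓ U')) ∧
      A = (A ⊓ U) ⊔ (A ⊓ U') ∧ B = (B ⊓ U) ⊔ (B ⊓ U') := by
  have hdisj : Disjoint (span k {x}) T :=
    (Disjoint.symm ((disjoint_span_singleton' hx).2 hxT))
  obtain ⟨U', hcompl, hTU'⟩ := exists_compl_ge (span k {x}) T hdisj
  have split : ∀ S : Submodule k V, x ∈ S ∨ S ≤ T → S = S ⊓ span k {x} ⊔ S ⊓ U' := by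
    rintro S (h | h)
    · exact split_of_le hcompl (span_le.2 (Set.singleton_subset_iff.2 h))
    · exact split_of_le_right (h.trans hTU')
  refine ⟨span k {x}, U', ?_, ?_, hcompl, fun i => split _ (hC i), split _ hA, split _ hB⟩
  · simpa [Submodule.span_singleton_eq_bot] using hx
  · intro hbot
    have h2 := Submodule.finrank_add_eq_of_isCompl hcompl
    rw [hbot, finrank_bot, finrank_span_singleton hx] at h2
    omega

end helpers

/-- Every indecomposable `k`-linear representation of the poset
`𝒫_n = {1 < 2 < ⋯ < n−1} ⊔ {1'} ⊔ {1''}` — a finite-dimensional space `V⁰` with a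
chain of subspaces `V^1 ⊇ V^2 ⊇ ⋯ ⊇ V^{n−1}` and two further subspaces `V'`, `V''`,
admitting no nontrivial compatible direct sum decomposition — has `dim V⁰ ≤ 2`. -/
theorem indecomposable_poset_rep_dim_le_two
    (k : Type) [Field k] (n : ℕ)
    (V : Type) [AddCommGroup V] [Module k V] [FiniteDimensional k V]
    (W : Fin (n - 1) → Submodule k V)
    (hW : ∀ i j : Fin (n - 1), i ≤ j → W j ≤ W i)
    (V' V'' : Submodule k V)
    (hind : ¬ ∃ U U' : Submodule k V, U ≠ ⊥ ∧ U' ≠ ⊥ ∧ IsCompl U U' ∧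
      (∀ i, W i = (W i ⊓ U) ⊔ (W i ⊓ U')) ∧
      V' = (V' ⊓ U) ⊔ (V' ⊓ U') ∧ V'' = (V'' ⊓ U) ⊔ (V'' ⊓ U')) :
    Module.finrank k V ≤ 2 := by
  by_contra hd
  have hdim : 3 ≤ finrank k V := by omega
  apply hind
  -- Case 1: V' ⊓ V'' ≠ ⊥ : split off a line inside V' ⊓ V''
  by_cases hab : V' ⊓ V'' = ⊥
  swap
  · obtain ⟨x, hxm, hx0⟩ := Submodule.exists_mem_ne_zero_of_ne_bot hab
    rw [Submodule.mem_inf] at hxm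
    by_cases hJ : {i : Fin (n-1) | x ∉ W i}.Nonempty
    · obtain ⟨m, hm, hmin⟩ := Set.exists_min_image _ id (Set.toFinite _) hJ
      refine split_from_vector hdim W V' V'' hx0 (W m) hm (Or.inl hxm.1) (Or.inl hxm.2) ?_
      intro i
      by_cases hxi : x ∈ W i
      · exact Or.inl hxi
      · exact Or.inr (hW m i (hmin i hxi))
    · refine split_from_vector hdim W V' V'' hx0 ⊥ (by simpa using hx0)
        (Or.inl hxm.1) (Or.inl hxm.2) ?_
      intro i
      by_cases hxi : x ∈ W i
      · exact Or.inl hxi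
      · exact absurd ⟨i, hxi⟩ hJ
  -- Case 2: V' ⊔ V'' ≠ ⊤ : split off a hyperplane containing V' ⊔ V''
  by_cases hsup : V' ⊔ V'' = ⊤
  swap
  · by_cases hJ : {i : Fin (n-1) | ¬ W i ≤ V' ⊔ V''}.Nonempty
    · obtain ⟨m, hm, hmax⟩ := Set.exists_max_image _ id (Set.toFinite _) hJ
      obtain ⟨x, hxW, hxT⟩ := SetLike.not_le_iff_exists.1 hm
      have hx0 : x ≠ 0 := fun h => hxT (h ▸ zero_mem _)
      refine split_from_vector hdim W V' V'' hx0 (V' ⊔ V'') hxT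
        (Or.inr le_sup_left) (Or.inr le_sup_right) ?_
      intro i
      by_cases hi : W i ≤ V' ⊔ V''
      · exact Or.inr hi
      · exact Or.inl (hW i m (hmax i hi) hxW)
    · have hex : ∃ x, x ∉ V' ⊔ V'' := by
        by_contra h
        push_neg at h
        exact hsup (Submodule.eq_top_iff'.2 h)
      obtain ⟨x, hxT⟩ := hex
      have hx0 : x ≠ 0 := fun h => hxT (h ▸ zero_mem _)
      refine split_from_vector hdim W V' V'' hx0 (V' ⊔ V'') hxT
        (Or.inr le_sup_left) (Or.inr le_sup_right) ?_
      intro i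
      by_cases hi : W i ≤ V' ⊔ V''
      · exact Or.inr hi
      · exact absurd ⟨i, hi⟩ hJ
  have hAB : IsCompl V' V'' := ⟨disjoint_iff.2 hab, codisjoint_iff.2 hsup⟩
  have hmem_inf_eq_zero : ∀ x : V, x ∈ V' → x ∈ V'' → x = 0 := by
    intro x h1 h2
    have h3 : x ∈ V' ⊓ V'' := Submodule.mem_inf.2 ⟨h1, h2⟩
    rw [hab] at h3
    simpa using h3
  -- Case 3: all chain members are ⊥
  by_cases hS : {i : Fin (n-1) | W i ≠ ⊥}.Nonempty
  swap
  · have hall : ∀ i, W i = ⊥ := by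
      intro i
      by_contra h
      exact hS ⟨i, h⟩
    by_cases hA0 : V' = ⊥
    · have hB : V'' = ⊤ := by rw [hA0, bot_sup_eq] at hsup; exact hsup
      have hnt : Nontrivial V := by
        refine Module.nontrivial_of_finrank_pos (R := k) ?_
        omega
      obtain ⟨x, hx0⟩ := exists_ne (0 : V)
      refine split_from_vector hdim W V' V'' hx0 ⊥ (by simpa using hx0)
        (Or.inr (by rw [hA0])) (Or.inl (by rw [hB]; trivial))
        (fun i => Or.inr (by rw [hall i]))
    · obtain ⟨x, hxA, hx0⟩ := Submodule.exists_mem_ne_zero_of_ne_bot hA0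
      have hxT : x ∉ V'' := fun h => hx0 (hmem_inf_eq_zero x hxA h)
      exact split_from_vector hdim W V' V'' hx0 V'' hxT (Or.inl hxA) (Or.inr le_rfl)
        (fun i => Or.inr (by rw [hall i]; exact bot_le))
  -- Main case setup
  obtain ⟨s, hsS, hsmax⟩ := Set.exists_max_image _ id (Set.toFinite _) hS
  have hWs_le : ∀ i, W i ≠ ⊥ → W s ≤ W i := fun i hi => hW i s (hsmax i hi)
  -- Case 4: W s ⊓ V' ≠ ⊥ or W s ⊓ V'' ≠ ⊥ : line splittings
  by_cases hWA : W s ⊓ V' = ⊥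
  swap
  · obtain ⟨x, hxm, hx0⟩ := Submodule.exists_mem_ne_zero_of_ne_bot hWA
    rw [Submodule.mem_inf] at hxm
    have hxT : x ∉ V'' := fun h => hx0 (hmem_inf_eq_zero x hxm.2 h)
    refine split_from_vector hdim W V' V'' hx0 V'' hxT (Or.inl hxm.2) (Or.inr le_rfl) ?_
    intro i
    by_cases hi : W i = ⊥
    · exact Or.inr (by rw [hi]; exact bot_le)
    · exact Or.inl (hWs_le i hi hxm.1)
  by_cases hWB : W s ⊓ V'' = ⊥
  swap
  · obtain ⟨x, hxm, hx0⟩ := Submodule.exists_mem_ne_zero_of_ne_bot hWB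
    rw [Submodule.mem_inf] at hxm
    have hxT : x ∉ V' := fun h => hx0 (hmem_inf_eq_zero x h hxm.2)
    refine split_from_vector hdim W V' V'' hx0 V' hxT (Or.inr le_rfl) (Or.inl hxm.2) ?_
    intro i
    by_cases hi : W i = ⊥
    · exact Or.inr (by rw [hi]; exact bot_le)
    · exact Or.inl (hWs_le i hi hxm.1)
  -- Main construction
  obtain ⟨v, hvs, hv0⟩ := Submodule.exists_mem_ne_zero_of_ne_bot hsS
  obtain ⟨a, haA, b, hbB, hab_v⟩ :=
    Submodule.mem_sup.1 (show v ∈ V' ⊔ V'' by rw [hsup]; trivial)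
  have ha0 : a ≠ 0 := by
    rintro rfl
    rw [zero_add] at hab_v
    subst hab_v
    exact hv0 ((Submodule.mem_bot k).1 (hWB ▸ Submodule.mem_inf.2 ⟨hvs, hbB⟩))
  have hb0 : b ≠ 0 := by
    rintro rfl
    rw [add_zero] at hab_v
    subst hab_v
    exact hv0 ((Submodule.mem_bot k).1 (hWA ▸ Submodule.mem_inf.2 ⟨hvs, haA⟩))
  set U : Submodule k V := span k {a} ⊔ span k {b} with hUdef
  have haU : a ∈ U := Submodule.mem_sup_left (Submodule.mem_span_singleton_self a)
  have hbU : b ∈ U := Submodule.mem_sup_right (Submodule.mem_span_singleton_self b)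
  have hvU : v ∈ U := hab_v ▸ add_mem haU hbU
  obtain ⟨D, hDch, hDprop⟩ :
      ∃ D : Submodule k V, (∀ i, W i ≠ ⊥ → ¬ U ≤ W i → W i ≤ D) ∧
        (D = ⊥ ∨ (v ∈ D ∧ ¬ U ≤ D)) := by
    by_cases hJ : {i : Fin (n-1) | W i ≠ ⊥ ∧ ¬ U ≤ W i}.Nonempty
    · obtain ⟨m, hm, hmin⟩ := Set.exists_min_image _ id (Set.toFinite _) hJ
      exact ⟨W m, fun i h1 h2 => hW m i (hmin i ⟨h1, h2⟩),
        Or.inr ⟨hWs_le m hm.1 hvs, hm.2⟩⟩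
    · exact ⟨⊥, fun i h1 h2 => (hJ ⟨i, h1, h2⟩).elim, Or.inl rfl⟩
  have hvN : v ∉ D ⊓ V' ⊔ D ⊓ V'' := by
    rcases hDprop with hD | ⟨hvD, hUD⟩
    · rw [hD]
      simpa using hv0
    · intro hmem
      obtain ⟨xa, hxa, xb, hxb, hsum⟩ := Submodule.mem_sup.1 hmem
      rw [Submodule.mem_inf] at hxa hxb
      have heq : a - xa = xb - b := by
        rw [sub_eq_sub_iff_add_eq_add, hab_v, ← hsum]
        abel
      have h0 : a - xa = 0 := by
        refine hmem_inf_eq_zero _ (sub_mem haA hxa.2) ?_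
        rw [heq]
        exact sub_mem hxb.2 hbB
      have haD : a ∈ D := by
        have : a = xa := by rwa [sub_eq_zero] at h0
        rw [this]; exact hxa.1
      have hbD : b ∈ D := by
        have h1 : xb - b = 0 := heq ▸ h0
        have : b = xb := by
          rw [sub_eq_zero] at h1
          exact h1.symm
        rw [this]; exact hxb.1
      exact hUD (sup_le (span_le.2 (Set.singleton_subset_iff.2 haD))
        (span_le.2 (Set.singleton_subset_iff.2 hbD)))
  obtain ⟨W₂, hW₂, hNW₂⟩ := exists_compl_ge (span k {v}) (D ⊓ V' ⊔ D ⊓ V'')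
    ((disjoint_span_singleton' hv0).2 hvN).symm
  -- projections associated to the two direct sum decompositions
  have hvPv : v ∈ span k {v} := Submodule.mem_span_singleton_self v
  set prP : V →ₗ[k] V :=
    (span k {v}).subtype ∘ₗ (span k {v}).projectionOnto W₂ hW₂ with hprPdef
  set pr : V →ₗ[k] V :=
    W₂.subtype ∘ₗ W₂.projectionOnto (span k {v}) hW₂.symm with hprdef
  have hprsum : ∀ x : V, prP x + pr x = x := fun x =>
    Submodule.projection_add_projection_eq_self hW₂ x
  have hprP_memPv : ∀ x : V, prP x ∈ span k {v} := fun x =>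
    ((span k {v}).projectionOnto W₂ hW₂ x).2
  have hprP_zero : ∀ x ∈ W₂, prP x = 0 := by
    intro x hx
    simp [hprPdef, Submodule.linearProjOfIsCompl_apply_right' hW₂ hx]
  have hprPv : prP v = v := by
    have h1 := Submodule.linearProjOfIsCompl_apply_left hW₂ ⟨v, hvPv⟩
    exact congrArg ((span k {v}).subtype) h1
  set πA : V →ₗ[k] V := V'.subtype ∘ₗ V'.projectionOnto V'' hAB with hπAdef
  set πB : V →ₗ[k] V := V''.subtype ∘ₗ V''.projectionOnto V' hAB.symm with hπBdef
  have hπsum : ∀ x : V, πA x + πB x = x := fun x =>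
    Submodule.projection_add_projection_eq_self hAB x
  have hπA_mem : ∀ x : V, πA x ∈ V' := fun x => (V'.projectionOnto V'' hAB x).2
  have hπB_mem : ∀ x : V, πB x ∈ V'' := fun x => (V''.projectionOnto V' hAB.symm x).2
  have hπA_right : ∀ x ∈ V'', πA x = 0 := by
    intro x hx
    simp [hπAdef, Submodule.linearProjOfIsCompl_apply_right' hAB hx]
  have hπB_right : ∀ x ∈ V', πB x = 0 := by
    intro x hx
    simp [hπBdef, Submodule.linearProjOfIsCompl_apply_right' hAB.symm hx]
  have hπAv : πA v = a := by
    rw [← hab_v, map_add, hπA_right b hbB, add_zero]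
    have h1 := Submodule.linearProjOfIsCompl_apply_left hAB ⟨a, haA⟩
    exact congrArg (V'.subtype) h1
  have hπBv : πB v = b := by
    rw [← hab_v, map_add, hπB_right a haA, zero_add]
    have h1 := Submodule.linearProjOfIsCompl_apply_left hAB.symm ⟨b, hbB⟩
    exact congrArg (V''.subtype) h1
  have hmemB_of_zero : ∀ x : V, πA x = 0 → x ∈ V'' := by
    intro x hx
    have h1 := hπsum x
    rw [hx, zero_add] at h1
    exact h1 ▸ hπB_mem x
  have hmemA_of_zero : ∀ x : V, πB x = 0 → x ∈ V' := by
    intro x hx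
    have h1 := hπsum x
    rw [hx, add_zero] at h1
    exact h1 ▸ hπA_mem x
  -- the two "error" subspaces
  have haSA : a ∉ D.map (πA ∘ₗ pr) := by
    intro hmem
    obtain ⟨d, hdD, hφ⟩ := Submodule.mem_map.1 hmem
    rcases hDprop with hD | ⟨hvD, hUD⟩
    · rw [hD] at hdD
      rw [Submodule.mem_bot] at hdD
      subst hdD
      rw [map_zero] at hφ
      exact ha0 hφ.symm
    · obtain ⟨c, hc⟩ := Submodule.mem_span_singleton.1 (hprP_memPv d)
      have hprd : pr d = d - c • v := by
        have h1 := hprsum d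
        rw [← hc] at h1
        exact eq_sub_of_add_eq' h1
      have hφ2 : πA (pr d) = a := hφ
      have h3 : πA (pr d) = πA d - c • a := by
        rw [hprd, map_sub, map_smul, hπAv]
      have hφ3 : πA d - c • a = a := h3.symm.trans hφ2
      have hπAd : πA d = (1 + c) • a := by
        rw [add_smul, one_smul]
        exact sub_eq_iff_eq_add.1 hφ3
      have heB : d - (1 + c) • v ∈ V'' := by
        apply hmemB_of_zero
        rw [map_sub, map_smul, hπAv, hπAd, sub_self]
      have heD : d - (1 + c) • v ∈ D := sub_mem hdD (D.smul_mem _ hvD)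
      have heW₂ : d - (1 + c) • v ∈ W₂ :=
        hNW₂ (Submodule.mem_sup_right (Submodule.mem_inf.2 ⟨heD, heB⟩))
      have h0 : prP (d - (1 + c) • v) = 0 := hprP_zero _ heW₂
      rw [map_sub, map_smul, hprPv, ← hc] at h0
      have h2 : c • v - (1 + c) • v = -v := by
        rw [add_smul, one_smul]; abel
      rw [h2] at h0
      exact hv0 (by simpa using h0)
  have hbSB : b ∉ D.map (πB ∘ₗ pr) := by
    intro hmem
    obtain ⟨d, hdD, hφ⟩ := Submodule.mem_map.1 hmem
    rcases hDprop with hD | ⟨hvD, hUD⟩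
    · rw [hD] at hdD
      rw [Submodule.mem_bot] at hdD
      subst hdD
      rw [map_zero] at hφ
      exact hb0 hφ.symm
    · obtain ⟨c, hc⟩ := Submodule.mem_span_singleton.1 (hprP_memPv d)
      have hprd : pr d = d - c • v := by
        have h1 := hprsum d
        rw [← hc] at h1
        exact eq_sub_of_add_eq' h1
      have hφ2 : πB (pr d) = b := hφ
      have h3 : πB (pr d) = πB d - c • b := by
        rw [hprd, map_sub, map_smul, hπBv]
      have hφ3 : πB d - c • b = b := h3.symm.trans hφ2
      have hπBd : πB d = (1 + c) • b := by
        rw [add_smul, one_smul]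
        exact sub_eq_iff_eq_add.1 hφ3
      have heA : d - (1 + c) • v ∈ V' := by
        apply hmemA_of_zero
        rw [map_sub, map_smul, hπBv, hπBd, sub_self]
      have heD : d - (1 + c) • v ∈ D := sub_mem hdD (D.smul_mem _ hvD)
      have heW₂ : d - (1 + c) • v ∈ W₂ :=
        hNW₂ (Submodule.mem_sup_left (Submodule.mem_inf.2 ⟨heD, heA⟩))
      have h0 : prP (d - (1 + c) • v) = 0 := hprP_zero _ heW₂
      rw [map_sub, map_smul, hprPv, ← hc] at h0
      have h2 : c • v - (1 + c) • v = -v := by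
        rw [add_smul, one_smul]; abel
      rw [h2] at h0
      exact hv0 (by simpa using h0)
  have hDle : D ≤ span k {v} ⊔ (D.map (πA ∘ₗ pr) ⊔ D.map (πB ∘ₗ pr)) := by
    intro d hd
    have h1 : d = prP d + ((πA ∘ₗ pr) d + (πB ∘ₗ pr) d) := by
      simp only [LinearMap.comp_apply]
      rw [hπsum (pr d), hprsum d]
    have h2 : prP d + ((πA ∘ₗ pr) d + (πB ∘ₗ pr) d) ∈
        span k {v} ⊔ (D.map (πA ∘ₗ pr) ⊔ D.map (πB ∘ₗ pr)) :=
      add_mem (Submodule.mem_sup_left (hprP_memPv d))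
        (Submodule.mem_sup_right (add_mem
          (Submodule.mem_sup_left (Submodule.mem_map_of_mem hd))
          (Submodule.mem_sup_right (Submodule.mem_map_of_mem hd))))
    rwa [← h1] at h2
  have hSA_le : D.map (πA ∘ₗ pr) ≤ V' := by
    rintro x hx
    obtain ⟨d, hd, rfl⟩ := Submodule.mem_map.1 hx
    exact hπA_mem _
  have hSB_le : D.map (πB ∘ₗ pr) ≤ V'' := by
    rintro x hx
    obtain ⟨d, hd, rfl⟩ := Submodule.mem_map.1 hx
    exact hπB_mem _
  obtain ⟨A₀, hSAA₀, hA₀A, hdisjA, hsupA⟩ := exists_rel_compl haA hSA_le haSA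
  obtain ⟨B₀, hSBB₀, hB₀B, hdisjB, hsupB⟩ := exists_rel_compl hbB hSB_le hbSB
  have hUcompl : IsCompl U (A₀ ⊔ B₀) := by
    constructor
    · rw [disjoint_iff, eq_bot_iff]
      rintro x hx
      rw [Submodule.mem_inf] at hx
      obtain ⟨hxU, hxW⟩ := hx
      rw [hUdef] at hxU
      obtain ⟨y, hy, z, hz, hsum1⟩ := Submodule.mem_sup.1 hxU
      obtain ⟨p, hp, q, hq, hsum2⟩ := Submodule.mem_sup.1 hxW
      have heq : y - p = q - z := by
        rw [sub_eq_sub_iff_add_eq_add, hsum1, ← hsum2]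
        exact add_comm _ _
      have hy0 : y - p ∈ V' :=
        sub_mem (span_le.2 (Set.singleton_subset_iff.2 haA) hy) (hA₀A hp)
      have hz0 : q - z ∈ V'' :=
        sub_mem (hB₀B hq) (span_le.2 (Set.singleton_subset_iff.2 hbB) hz)
      have h00 : y - p = 0 := by
        refine hmem_inf_eq_zero _ hy0 ?_
        rw [heq]
        exact hz0
      have hyp : y = p := sub_eq_zero.1 h00
      have hqz : q = z := sub_eq_zero.1 (heq.symm.trans h00)
      have hy00 : y = 0 := by
        have hyA₀ : y ∈ A₀ := by rw [hyp]; exact hp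
        simpa using hdisjA.le_bot (Submodule.mem_inf.2 ⟨hy, hyA₀⟩)
      have hz00 : z = 0 := by
        have hzB₀ : z ∈ B₀ := by rw [← hqz]; exact hq
        simpa using hdisjB.le_bot (Submodule.mem_inf.2 ⟨hz, hzB₀⟩)
      rw [Submodule.mem_bot, ← hsum1, hy00, hz00, add_zero]
    · rw [codisjoint_iff, hUdef, sup_sup_sup_comm, hsupA, hsupB]
      exact hsup
  refine ⟨U, A₀ ⊔ B₀, ?_, ?_, hUcompl, ?_, ?_, ?_⟩
  · intro h
    exact ha0 ((Submodule.mem_bot k).1 (h ▸ haU))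
  · intro h
    have hA₀ : A₀ = ⊥ := le_bot_iff.1 (le_sup_left.trans h.le)
    have hB₀ : B₀ = ⊥ := le_bot_iff.1 (le_sup_right.trans h.le)
    rw [hA₀, sup_bot_eq] at hsupA
    rw [hB₀, sup_bot_eq] at hsupB
    have h1 := Submodule.finrank_sup_add_finrank_inf_eq V' V''
    rw [hsup, hab] at h1
    have h2 : finrank k V' = 1 := by rw [← hsupA]; exact finrank_span_singleton ha0
    have h3 : finrank k V'' = 1 := by rw [← hsupB]; exact finrank_span_singleton hb0
    rw [finrank_top, finrank_bot, h2, h3] at h1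
    omega
  · intro i
    by_cases hib : W i = ⊥
    · simp [hib]
    by_cases hiU : U ≤ W i
    · exact split_of_le hUcompl hiU
    · have h1 : W i ≤ D := hDch i hib hiU
      have h2 : W i ≤ span k {v} ⊔ (A₀ ⊔ B₀) := by
        refine h1.trans (hDle.trans ?_)
        exact sup_le_sup_left
          (sup_le (hSAA₀.trans le_sup_left) (hSBB₀.trans le_sup_right)) _
      exact split_of_mem_line (hWs_le i hib hvs) hvU h2
  · refine le_antisymm ?_ (sup_le inf_le_left inf_le_left)
    conv_lhs => rw [← hsupA]
    refine sup_le ?_ ?_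
    · refine le_trans (le_inf (span_le.2 (Set.singleton_subset_iff.2 haA)) ?_) le_sup_left
      exact span_le.2 (Set.singleton_subset_iff.2 haU)
    · exact le_trans (le_inf hA₀A le_sup_left) le_sup_right
  · refine le_antisymm ?_ (sup_le inf_le_left inf_le_left)
    conv_lhs => rw [← hsupB]
    refine sup_le ?_ ?_
    · refine le_trans (le_inf (span_le.2 (Set.singleton_subset_iff.2 hbB)) ?_) le_sup_left
      exact span_le.2 (Set.singleton_subset_iff.2 hbU)
    · exact le_trans (le_inf hB₀B le_sup_right) le_sup_right
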